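/- Λ(Y|X) = 0 if and only if Y is stochastically comparable relative to X, that is, if and only if Ψ(κ(x₁), κ(x₂)) = 1/2 for (μ_X ⊗ μ_X)-almost all (x₁, x₂) with x₁ ≠ x₂. -/

import Mathlib

open MeasureTheory ProbabilityTheory Set Filter Topology

/-- The (nonparametric) relative effect `Ψ(μ, ν) = ∫ μ((-∞,y)) + (1/2) μ({y}) dν(y)`. -/
noncomputable def relEffect (μ ν : Measure ℝ) : ℝ :=
  ∫ y, ((μ (Set.Iio y)).toReal + (1 / 2) * (μ {y}).toReal) ∂ν

/-- `α(μ) = 1 - ∫ μ({x}) dμ(x) = 1 - P(X = X*)`, the non-discrete mass of `μ`. -/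
noncomputable def alphaCoeff {E : Type*} [MeasurableSpace E] (μ : Measure E) : ℝ :=
  1 - ∫ x, (μ {x}).toReal ∂μ

/-- The coefficient of separation `Λ(Y|X)`. -/
noncomputable def sepCoeff {Ω E : Type*} [MeasurableSpace Ω] [MeasurableSpace E]
    (P : Measure Ω) [IsFiniteMeasure P] (Y : Ω → ℝ) (X : Ω → E) : ℝ :=
  (alphaCoeff (P.map X))⁻¹ *
    ∫ x : E × E,
      (relEffect (condDistrib Y X P x.1) (condDistrib Y X P x.2)
        - relEffect (condDistrib Y X P x.2) (condDistrib Y X P x.1)) ^ 2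
      ∂((P.map X).prod (P.map X))

/-- A random variable is non-degenerate if it is not a.s. constant. -/
def Nondegenerate {Ω α : Type*} [MeasurableSpace Ω] (P : Measure Ω) (Z : Ω → α) : Prop :=
  ¬ ∃ c, ∀ᵐ ω ∂P, Z ω = c

/-- `Y` is stochastically comparable relative to `X`. -/
def StochasticallyComparable {Ω E : Type*} [MeasurableSpace Ω] [MeasurableSpace E]
    (P : Measure Ω) [IsFiniteMeasure P] (Y : Ω → ℝ) (X : Ω → E) : Prop :=
  ∀ᵐ x : E × E ∂((P.map X).prod (P.map X)), x.1 ≠ x.2 →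
    relEffect (condDistrib Y X P x.1) (condDistrib Y X P x.2) = 1 / 2

lemma relEffect_repr (μ ν : Measure ℝ) [IsProbabilityMeasure μ] [IsProbabilityMeasure ν] :
    relEffect μ ν = ((ν.prod μ) {p : ℝ × ℝ | p.2 < p.1}).toReal
      + (1 / 2) * ((ν.prod μ) {p : ℝ × ℝ | p.2 = p.1}).toReal := by
  have hB : MeasurableSet {p : ℝ × ℝ | p.2 < p.1} :=
    measurableSet_lt measurable_snd measurable_fst
  have hD : MeasurableSet {p : ℝ × ℝ | p.2 = p.1} :=
    measurableSet_eq_fun measurable_snd measurable_fst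
  have m1 : Measurable fun y : ℝ => μ (Set.Iio y) := by
    exact measurable_measure_prodMk_left (ν := μ) hB
  have m2 : Measurable fun y : ℝ => μ {y} := by
    simpa using measurable_measure_prodMk_left (ν := μ) hD
  have hle : ∀ s : Set ℝ, (μ s).toReal ≤ 1 := fun s => by
    simpa using ENNReal.toReal_mono ENNReal.one_ne_top prob_le_one
  have hint1 : Integrable (fun y : ℝ => (μ (Set.Iio y)).toReal) ν := by
    refine (integrable_const (1 : ℝ)).mono' m1.ennreal_toReal.aestronglyMeasurable
      (ae_of_all _ fun y => ?_)
    rw [Real.norm_eq_abs, abs_of_nonneg ENNReal.toReal_nonneg]; exact hle _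
  have hint2 : Integrable (fun y : ℝ => (μ {y}).toReal) ν := by
    refine (integrable_const (1 : ℝ)).mono' m2.ennreal_toReal.aestronglyMeasurable
      (ae_of_all _ fun y => ?_)
    rw [Real.norm_eq_abs, abs_of_nonneg ENNReal.toReal_nonneg]; exact hle _
  have e1 : ∫⁻ y, μ (Set.Iio y) ∂ν = (ν.prod μ) {p : ℝ × ℝ | p.2 < p.1} := by
    rw [Measure.prod_apply hB]; rfl
  have e2 : ∫⁻ y, μ {y} ∂ν = (ν.prod μ) {p : ℝ × ℝ | p.2 = p.1} := by
    rw [Measure.prod_apply hD]; rfl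
  rw [relEffect, integral_add hint1 (hint2.const_mul _), integral_const_mul,
    integral_toReal m1.aemeasurable (ae_of_all _ fun y => measure_lt_top _ _),
    integral_toReal m2.aemeasurable (ae_of_all _ fun y => measure_lt_top _ _), e1, e2]

lemma relEffect_nonneg (μ ν : Measure ℝ) [IsProbabilityMeasure μ] [IsProbabilityMeasure ν] :
    0 ≤ relEffect μ ν := by
  rw [relEffect_repr]; positivity

lemma relEffect_le (μ ν : Measure ℝ) [IsProbabilityMeasure μ] [IsProbabilityMeasure ν] :
    relEffect μ ν ≤ 3 / 2 := by
  rw [relEffect_repr]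
  have h1 : ((ν.prod μ) {p : ℝ × ℝ | p.2 < p.1}).toReal ≤ 1 := by
    simpa using ENNReal.toReal_mono ENNReal.one_ne_top prob_le_one
  have h2 : ((ν.prod μ) {p : ℝ × ℝ | p.2 = p.1}).toReal ≤ 1 := by
    simpa using ENNReal.toReal_mono ENNReal.one_ne_top prob_le_one
  linarith

lemma relEffect_add_relEffect (μ ν : Measure ℝ) [IsProbabilityMeasure μ] [IsProbabilityMeasure ν] :
    relEffect μ ν + relEffect ν μ = 1 := by
  have hB : MeasurableSet {p : ℝ × ℝ | p.2 < p.1} :=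
    measurableSet_lt measurable_snd measurable_fst
  have hA : MeasurableSet {p : ℝ × ℝ | p.1 < p.2} :=
    measurableSet_lt measurable_fst measurable_snd
  have hD : MeasurableSet {p : ℝ × ℝ | p.2 = p.1} :=
    measurableSet_eq_fun measurable_snd measurable_fst
  rw [relEffect_repr μ ν, relEffect_repr ν μ]
  have hswapB : (μ.prod ν) {p : ℝ × ℝ | p.2 < p.1} = (ν.prod μ) {p : ℝ × ℝ | p.1 < p.2} := by
    rw [← Measure.prod_swap, Measure.map_apply measurable_swap hB]; rfl
  have hswapD : (μ.prod ν) {p : ℝ × ℝ | p.2 = p.1} = (ν.prod μ) {p : ℝ × ℝ | p.2 = p.1} := by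
    rw [← Measure.prod_swap, Measure.map_apply measurable_swap hD]
    congr 1; ext x; simp [eq_comm]
  rw [hswapB, hswapD]
  set τ := ν.prod μ
  have hdisj1 : Disjoint {p : ℝ × ℝ | p.2 < p.1} {p : ℝ × ℝ | p.2 = p.1} := by
    rw [Set.disjoint_left]; intro x hx hx'
    simp only [Set.mem_setOf_eq] at hx hx'
    exact absurd hx' (ne_of_lt hx)
  have hdisj2 : Disjoint ({p : ℝ × ℝ | p.2 < p.1} ∪ {p : ℝ × ℝ | p.2 = p.1})
      {p : ℝ × ℝ | p.1 < p.2} := by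
    rw [Set.disjoint_left]; rintro x (hx | hx) hx' <;>
      simp only [Set.mem_setOf_eq] at hx hx' <;> linarith
  have hU : ({p : ℝ × ℝ | p.2 < p.1} ∪ {p : ℝ × ℝ | p.2 = p.1}) ∪ {p : ℝ × ℝ | p.1 < p.2}
      = Set.univ := by
    ext x; simp only [Set.mem_union, Set.mem_setOf_eq, Set.mem_univ, iff_true]
    rcases lt_trichotomy x.2 x.1 with h | h | h
    · exact Or.inl (Or.inl h)
    · exact Or.inl (Or.inr h)
    · exact Or.inr h
  have key : τ {p : ℝ × ℝ | p.2 < p.1} + τ {p : ℝ × ℝ | p.2 = p.1}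
      + τ {p : ℝ × ℝ | p.1 < p.2} = 1 := by
    rw [← measure_union hdisj1 hD, ← measure_union hdisj2 hA, hU, measure_univ]
  have keyR : (τ {p : ℝ × ℝ | p.2 < p.1}).toReal + (τ {p : ℝ × ℝ | p.2 = p.1}).toReal
      + (τ {p : ℝ × ℝ | p.1 < p.2}).toReal = 1 := by
    rw [← ENNReal.toReal_add (measure_ne_top _ _) (measure_ne_top _ _),
      ← ENNReal.toReal_add (by finiteness) (measure_ne_top _ _), key, ENNReal.toReal_one]
  linarith

lemma measurable_relEffect {E : Type*} [MeasurableSpace E]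
    (κ : ProbabilityTheory.Kernel E ℝ) [ProbabilityTheory.IsMarkovKernel κ] :
    Measurable fun x : E × E => relEffect (κ x.1) (κ x.2) := by
  have hB : MeasurableSet {p : ℝ × ℝ | p.2 < p.1} :=
    measurableSet_lt measurable_snd measurable_fst
  have hD : MeasurableSet {p : ℝ × ℝ | p.2 = p.1} :=
    measurableSet_eq_fun measurable_snd measurable_fst
  set κ' : ProbabilityTheory.Kernel (E × E) (ℝ × ℝ) :=
    (κ.comap Prod.snd measurable_snd).prod (κ.comap Prod.fst measurable_fst) with hκ'def
  have hκ' : ∀ x : E × E, κ' x = ((κ x.2).prod (κ x.1)) := fun x => by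
    rw [hκ'def, ProbabilityTheory.Kernel.prod_apply, ProbabilityTheory.Kernel.comap_apply,
      ProbabilityTheory.Kernel.comap_apply]
  have hrepr : (fun x : E × E => relEffect (κ x.1) (κ x.2))
      = fun x : E × E => (κ' x {p : ℝ × ℝ | p.2 < p.1}).toReal
        + (1 / 2) * (κ' x {p : ℝ × ℝ | p.2 = p.1}).toReal := by
    funext x; rw [relEffect_repr, hκ' x]
  rw [hrepr]
  exact ((κ'.measurable_coe hB).ennreal_toReal).add
    (((κ'.measurable_coe hD).ennreal_toReal).const_mul _)

lemma alphaCoeff_ne_zero' {E : Type*} [MeasurableSpace E] (μ : Measure E) [IsProbabilityMeasure μ]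
    (hdiag : MeasurableSet {q : E × E | q.2 = q.1})
    (h : ∀ x₀ : E, μ {x₀} ≠ 1) : 1 - ∫ x, (μ {x}).toReal ∂μ ≠ 0 := by
  intro hc
  have hι : ∫ x, (μ {x}).toReal ∂μ = 1 := by linarith
  have hm : Measurable fun x : E => μ {x} := by
    simpa using measurable_measure_prodMk_left (ν := μ) hdiag
  have hint : Integrable (fun x : E => (μ {x}).toReal) μ := by
    refine (integrable_const (1 : ℝ)).mono' hm.ennreal_toReal.aestronglyMeasurable
      (ae_of_all _ fun x => ?_)
    rw [Real.norm_eq_abs, abs_of_nonneg ENNReal.toReal_nonneg]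
    simpa using ENNReal.toReal_mono ENNReal.one_ne_top prob_le_one
  have hz : ∫ x, (1 - (μ {x}).toReal) ∂μ = 0 := by
    rw [integral_sub (integrable_const 1) hint, hι]; simp
  have hae : ∀ᵐ x ∂μ, 1 - (μ {x}).toReal = 0 := by
    have := (integral_eq_zero_iff_of_nonneg (f := fun x => 1 - (μ {x}).toReal)
      (fun x => by
        simp only [Pi.zero_apply, sub_nonneg]
        simpa using ENNReal.toReal_mono ENNReal.one_ne_top prob_le_one)
      ((integrable_const 1).sub hint)).mp hz
    exact this
  haveI : (ae μ).NeBot := ae_neBot.mpr (IsProbabilityMeasure.ne_zero μ)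
  obtain ⟨x₀, hx₀⟩ := hae.exists
  refine h x₀ ?_
  rw [← ENNReal.toReal_eq_one_iff]
  linarith


/-- `Λ(Y|X) = 0` iff `Y` is stochastically comparable relative to `X`. -/
theorem sepCoeff_eq_zero_iff_stochasticallyComparable
    {Ω : Type*} [MeasurableSpace Ω] {p : ℕ} (hp : 1 ≤ p)
    (P : Measure Ω) [IsProbabilityMeasure P]
    (X : Ω → (Fin p → ℝ)) (Y : Ω → ℝ)
    (hX : Measurable X) (hY : Measurable Y)
    (hXnd : ∃ k, Nondegenerate P fun ω => X ω k)
    (hYnd : Nondegenerate P Y) :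
    sepCoeff P Y X = 0 ↔ StochasticallyComparable P Y X := by
  classical
  set μ : Measure (Fin p → ℝ) := P.map X with hμdef
  haveI : IsProbabilityMeasure μ := Measure.isProbabilityMeasure_map hX.aemeasurable
  set κ : ProbabilityTheory.Kernel (Fin p → ℝ) ℝ := condDistrib Y X P with hκdef
  set f : ((Fin p → ℝ) × (Fin p → ℝ)) → ℝ :=
    fun x => relEffect (κ x.1) (κ x.2) - relEffect (κ x.2) (κ x.1) with hfdef
  have hfm : Measurable f :=
    (measurable_relEffect κ).sub ((measurable_relEffect κ).comp measurable_swap)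
  have hfb : ∀ x, |f x| ≤ 3 := by
    intro x
    have h1 := relEffect_nonneg (κ x.1) (κ x.2)
    have h2 := relEffect_nonneg (κ x.2) (κ x.1)
    have h3 := relEffect_le (κ x.1) (κ x.2)
    have h4 := relEffect_le (κ x.2) (κ x.1)
    have hfx : f x = relEffect (κ x.1) (κ x.2) - relEffect (κ x.2) (κ x.1) := rfl
    rw [hfx, abs_le]; constructor <;> linarith
  have hint : Integrable (fun x => f x ^ 2) (μ.prod μ) := by
    refine (integrable_const (9 : ℝ)).mono'
      ((hfm.pow_const 2).aestronglyMeasurable) (ae_of_all _ fun x => ?_)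
    rw [Real.norm_eq_abs, abs_pow, sq_abs, ← sq_abs]
    nlinarith [hfb x, abs_nonneg (f x)]
  have hdiag : MeasurableSet {q : (Fin p → ℝ) × (Fin p → ℝ) | q.2 = q.1} :=
    measurableSet_eq_fun measurable_snd measurable_fst
  have hsingle : ∀ x₀ : Fin p → ℝ, μ {x₀} ≠ 1 := by
    intro x₀ h1
    obtain ⟨k, hk⟩ := hXnd
    refine hk ⟨x₀ k, ?_⟩
    have hXx : ∀ᵐ ω ∂P, X ω = x₀ := by
      rw [hμdef, Measure.map_apply hX (measurableSet_singleton x₀)] at h1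
      have : P (X ⁻¹' {x₀})ᶜ = 0 :=
        (prob_compl_eq_zero_iff (hX (measurableSet_singleton x₀))).mpr h1
      filter_upwards [measure_eq_zero_iff_ae_notMem.mp this] with ω hω
      simpa using hω
    filter_upwards [hXx] with ω hω
    rw [hω]
  have hα : alphaCoeff μ ≠ 0 := alphaCoeff_ne_zero' μ hdiag hsingle
  have hsep : sepCoeff P Y X = (alphaCoeff μ)⁻¹ * ∫ x, f x ^ 2 ∂(μ.prod μ) := rfl
  have key : (∫ x, f x ^ 2 ∂(μ.prod μ)) = 0 ↔ ∀ᵐ x ∂(μ.prod μ), f x = 0 := by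
    rw [integral_eq_zero_iff_of_nonneg (fun x => sq_nonneg _) hint]
    constructor
    · intro h; filter_upwards [h] with x hx
      exact (pow_eq_zero_iff two_ne_zero).mp hx
    · intro h; filter_upwards [h] with x hx
      simp [hx]
  constructor
  · intro h
    rw [hsep] at h
    have hI : (∫ x, f x ^ 2 ∂(μ.prod μ)) = 0 := by
      rcases mul_eq_zero.mp h with h' | h'
      · exact absurd (inv_eq_zero.mp h') hα
      · exact h'
    show ∀ᵐ x : (Fin p → ℝ) × (Fin p → ℝ) ∂(μ.prod μ), x.1 ≠ x.2 →
      relEffect (κ x.1) (κ x.2) = 1 / 2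
    filter_upwards [key.mp hI] with x hx _
    have hsum := relEffect_add_relEffect (κ x.1) (κ x.2)
    have hx' : relEffect (κ x.1) (κ x.2) - relEffect (κ x.2) (κ x.1) = 0 := hx
    linarith
  · intro h
    have h' : ∀ᵐ x : (Fin p → ℝ) × (Fin p → ℝ) ∂(μ.prod μ), x.1 ≠ x.2 →
        relEffect (κ x.1) (κ x.2) = 1 / 2 := h
    have hf0 : ∀ᵐ x ∂(μ.prod μ), f x = 0 := by
      filter_upwards [h'] with x hx
      show relEffect (κ x.1) (κ x.2) - relEffect (κ x.2) (κ x.1) = 0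
      by_cases hxe : x.1 = x.2
      · rw [hxe, sub_self]
      · have h12 := hx hxe
        have hsum := relEffect_add_relEffect (κ x.1) (κ x.2)
        linarith
    rw [hsep, key.mpr hf0, mul_zero]
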